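/- In the GLM setting, let θ̆ : ℝ → ℝ^d be a differentiable curve of stationary solutions, i.e. ∇A(θ̆(τ)) = M(τ; θ̆(τ)) for all τ, with H(τ) := ∇²A(θ̆(τ)) + τ·V(τ; θ̆(τ)) invertible for each τ. Then for every t ≠ 0 and every τ ∈ ℝ, the derivative of the t-tilted loss along the solution path satisfies d/dτ [R̃(t; θ̆(τ))] = θ̆(τ)ᵀ · V(τ; θ̆(τ)) · H(τ)^{-1} · (∫_t^τ V(ν; θ̆(τ)) dν) · θ̆(τ); in particular this derivative vanishes at τ = t. -/

import Mathlib

open Real Finset MeasureTheory intervalIntegral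

/-- Empirical log-partition function `Γ(t;θ) = log((1/N)·Σᵢ exp(−t·⟨θ,Tᵢ⟩))`. -/
noncomputable def glmGamma {d N : ℕ} (T : Fin N → EuclideanSpace ℝ (Fin d)) (t : ℝ)
    (θ : EuclideanSpace ℝ (Fin d)) : ℝ :=
  Real.log ((1 / (N : ℝ)) * ∑ i, Real.exp (-t * (inner ℝ θ (T i) : ℝ)))

/-- Tilted empirical mean `M(t;θ) = (1/N)·Σᵢ Tᵢ·exp(−t·⟨θ,Tᵢ⟩ − Γ(t;θ))`. -/
noncomputable def glmM {d N : ℕ} (T : Fin N → EuclideanSpace ℝ (Fin d)) (t : ℝ)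
    (θ : EuclideanSpace ℝ (Fin d)) : EuclideanSpace ℝ (Fin d) :=
  ∑ i, ((1 / (N : ℝ)) * Real.exp (-t * (inner ℝ θ (T i) : ℝ) - glmGamma T t θ)) • T i

/-- Tilted empirical covariance `V(t;θ)` of the sufficient statistic, as a linear operator. -/
noncomputable def glmV {d N : ℕ} (T : Fin N → EuclideanSpace ℝ (Fin d)) (t : ℝ)
    (θ : EuclideanSpace ℝ (Fin d)) :
    EuclideanSpace ℝ (Fin d) →L[ℝ] EuclideanSpace ℝ (Fin d) :=
  ∑ i, ((1 / (N : ℝ)) * Real.exp (-t * (inner ℝ θ (T i) : ℝ) - glmGamma T t θ)) •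
    ((innerSL ℝ (T i - glmM T t θ)).smulRight (T i - glmM T t θ))

/-- The `t`-tilted GLM loss for `t ≠ 0`:
`R̃(t;θ) = (1/t)·log((1/N)·Σᵢ exp(t·(A(θ) − ⟨θ,Tᵢ⟩)))`. -/
noncomputable def glmTiltedLoss {d N : ℕ} (T : Fin N → EuclideanSpace ℝ (Fin d))
    (A : EuclideanSpace ℝ (Fin d) → ℝ) (t : ℝ) (θ : EuclideanSpace ℝ (Fin d)) : ℝ :=
  (1 / t) * Real.log ((1 / (N : ℝ)) * ∑ i, Real.exp (t * (A θ - (inner ℝ θ (T i) : ℝ))))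

section Aux

local notation "⟪" x ", " y "⟫" => (inner ℝ x y : ℝ)

variable {d N : ℕ} (T : Fin N → EuclideanSpace ℝ (Fin d))

/-- Unnormalized partition sum. -/
noncomputable def glmD (t : ℝ) (θ : EuclideanSpace ℝ (Fin d)) : ℝ :=
  ∑ i, Real.exp (-t * ⟪θ, T i⟫)

/-- Tilted weights. -/
noncomputable def glmW (t : ℝ) (θ : EuclideanSpace ℝ (Fin d)) (i : Fin N) : ℝ :=
  (1 / (N : ℝ)) * Real.exp (-t * ⟪θ, T i⟫ - glmGamma T t θ)

lemma glmD_pos (hN : 0 < N) (t : ℝ) (θ : EuclideanSpace ℝ (Fin d)) : 0 < glmD T t θ := by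
  have : Nonempty (Fin N) := Fin.pos_iff_nonempty.mp hN
  exact Finset.sum_pos (fun i _ => Real.exp_pos _) Finset.univ_nonempty

lemma exp_glmGamma (hN : 0 < N) (t : ℝ) (θ : EuclideanSpace ℝ (Fin d)) :
    Real.exp (glmGamma T t θ) = (1 / (N : ℝ)) * glmD T t θ := by
  have hNR : (0:ℝ) < N := by exact_mod_cast hN
  have h : (0:ℝ) < (1 / (N : ℝ)) * glmD T t θ :=
    mul_pos (by positivity) (glmD_pos T hN t θ)
  exact Real.exp_log h

lemma glmW_eq (hN : 0 < N) (t : ℝ) (θ : EuclideanSpace ℝ (Fin d)) (i : Fin N) :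
    glmW T t θ i = Real.exp (-t * ⟪θ, T i⟫) / glmD T t θ := by
  have hNR : (0:ℝ) < N := by exact_mod_cast hN
  have hD := glmD_pos T hN t θ
  rw [glmW, Real.exp_sub, exp_glmGamma T hN]
  field_simp

lemma glmW_sum (hN : 0 < N) (t : ℝ) (θ : EuclideanSpace ℝ (Fin d)) :
    ∑ i, glmW T t θ i = 1 := by
  have hD := (glmD_pos T hN t θ).ne'
  simp only [glmW_eq T hN]
  rw [← Finset.sum_div, glmD]
  exact div_self hD

lemma glmM_eq (t : ℝ) (θ : EuclideanSpace ℝ (Fin d)) :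
    glmM T t θ = ∑ i, glmW T t θ i • T i := rfl

lemma inner_glmM (t : ℝ) (θ v : EuclideanSpace ℝ (Fin d)) :
    ⟪glmM T t θ, v⟫ = ∑ i, glmW T t θ i * ⟪T i, v⟫ := by
  rw [glmM_eq, sum_inner]
  exact Finset.sum_congr rfl fun i _ => real_inner_smul_left (T i) v (glmW T t θ i)

lemma glmV_apply (t : ℝ) (θ v : EuclideanSpace ℝ (Fin d)) :
    glmV T t θ v = ∑ i, (glmW T t θ i * ⟪T i - glmM T t θ, v⟫) • (T i - glmM T t θ) := by
  simp only [glmV, glmW, ContinuousLinearMap.sum_apply, ContinuousLinearMap.coe_smul',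
    Pi.smul_apply, ContinuousLinearMap.smulRight_apply, innerSL_apply_apply, smul_smul]

lemma glmV_coeff_sum (hN : 0 < N) (t : ℝ) (θ v : EuclideanSpace ℝ (Fin d)) :
    ∑ i, glmW T t θ i * ⟪T i - glmM T t θ, v⟫ = 0 := by
  simp only [inner_sub_left, mul_sub]
  rw [Finset.sum_sub_distrib, ← inner_glmM T t θ v, ← Finset.sum_mul, glmW_sum T hN, one_mul,
    sub_self]

lemma glmV_apply' (hN : 0 < N) (t : ℝ) (θ v : EuclideanSpace ℝ (Fin d)) :
    glmV T t θ v = ∑ i, (glmW T t θ i * ⟪T i - glmM T t θ, v⟫) • T i := by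
  rw [glmV_apply]
  simp only [smul_sub]
  rw [Finset.sum_sub_distrib, ← Finset.sum_smul, glmV_coeff_sum T hN, zero_smul, sub_zero]

lemma glmV_symm (t : ℝ) (θ u v : EuclideanSpace ℝ (Fin d)) :
    ⟪glmV T t θ u, v⟫ = ⟪u, glmV T t θ v⟫ := by
  rw [glmV_apply, glmV_apply, sum_inner, inner_sum]
  refine Finset.sum_congr rfl fun i _ => ?_
  rw [real_inner_smul_left, real_inner_smul_right]
  rw [real_inner_comm u (T i - glmM T t θ)]
  ring

end Aux

section Deriv

local notation "⟪" x ", " y "⟫" => (inner ℝ x y : ℝ)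

variable {d N : ℕ}

lemma hasDerivAt_glmM_comp (T : Fin N → EuclideanSpace ℝ (Fin d)) (hN : 0 < N)
    (c : ℝ → EuclideanSpace ℝ (Fin d)) (c' : EuclideanSpace ℝ (Fin d)) (s₀ : ℝ)
    (hc : HasDerivAt c c' s₀) :
    HasDerivAt (fun s => glmM T s (c s))
      (-(glmV T s₀ (c s₀) (c s₀)) - s₀ • glmV T s₀ (c s₀) c') s₀ := by
  set θ := c s₀ with hθdef
  have hDpos : 0 < glmD T s₀ θ := glmD_pos T hN s₀ θ
  have hDne : glmD T s₀ θ ≠ 0 := hDpos.ne'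
  -- abbreviations as plain functions
  set x : Fin N → ℝ := fun i => ⟪θ, T i⟫ with hx
  set xd : Fin N → ℝ := fun i => ⟪c', T i⟫ with hxd
  set u : Fin N → ℝ := fun i => Real.exp (-s₀ * x i) with hu
  set w : Fin N → ℝ := fun i => glmW T s₀ θ i with hw
  set D : ℝ := glmD T s₀ θ with hD
  set D' : ℝ := ∑ j, u j * (-(x j + s₀ * xd j)) with hD'
  -- step 1 : derivatives of the building blocks
  have hinner : ∀ i : Fin N, HasDerivAt (fun s => ⟪c s, T i⟫) (xd i) s₀ := fun i => by
    simpa using HasDerivAt.inner ℝ hc (hasDerivAt_const s₀ (T i))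
  have hexp : ∀ i : Fin N, HasDerivAt (fun s => Real.exp (-s * ⟪c s, T i⟫))
      (u i * (-(x i + s₀ * xd i))) s₀ := by
    intro i
    have h2 := ((hasDerivAt_id s₀).mul (hinner i)).neg
    simp only [neg_mul, one_mul, id_eq] at h2
    simpa [hu, neg_mul] using h2.exp
  have hDsum : HasDerivAt (fun s => ∑ j, Real.exp (-s * ⟪c s, T j⟫)) D' s₀ :=
    HasDerivAt.fun_sum fun j _ => hexp j
  have hDval : (∑ j, Real.exp (-s₀ * ⟪c s₀, T j⟫)) = D := by
    simp only [hD, glmD, ← hθdef, hu, hx]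
  have hw_i : ∀ i : Fin N, HasDerivAt
      (fun s => Real.exp (-s * ⟪c s, T i⟫) / ∑ j, Real.exp (-s * ⟪c s, T j⟫))
      ((u i * (-(x i + s₀ * xd i)) * D - u i * D') / D ^ 2) s₀ := by
    intro i
    have h3 := (hexp i).div hDsum (by rw [hDval]; exact hDne)
    have h4 : Real.exp (-s₀ * ⟪c s₀, T i⟫) = u i := rfl
    rw [hDval, h4] at h3
    exact h3
  have hMsum : HasDerivAt
      (fun s => ∑ i, (Real.exp (-s * ⟪c s, T i⟫) / ∑ j, Real.exp (-s * ⟪c s, T j⟫)) • T i)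
      (∑ i, ((u i * (-(x i + s₀ * xd i)) * D - u i * D') / D ^ 2) • T i) s₀ :=
    HasDerivAt.fun_sum fun i _ => (hw_i i).smul_const (T i)
  -- step 2 : the function is `glmM` along the path
  have hfun : (fun s => glmM T s (c s)) =
      fun s => ∑ i, (Real.exp (-s * ⟪c s, T i⟫) / ∑ j, Real.exp (-s * ⟪c s, T j⟫)) • T i := by
    funext s
    rw [glmM_eq]
    refine Finset.sum_congr rfl fun i _ => ?_
    rw [glmW_eq T hN]
    rfl
  rw [hfun]
  convert hMsum using 1
  -- step 3 : identify the derivative value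
  have hu_eq : ∀ j, u j = w j * D := fun j => by
    simp only [hu, hw, hD, glmW_eq T hN, hx]
    field_simp
    exact (div_self hDne).symm
  have hMP : ⟪θ, glmM T s₀ θ⟫ = ∑ j, w j * x j := by
    rw [real_inner_comm, inner_glmM]
    refine Finset.sum_congr rfl fun j _ => ?_
    rw [real_inner_comm]
  have hMQ : ⟪c', glmM T s₀ θ⟫ = ∑ j, w j * xd j := by
    rw [real_inner_comm, inner_glmM]
    refine Finset.sum_congr rfl fun j _ => ?_
    rw [real_inner_comm]
  have hDeq : D' = D * (-(⟪θ, glmM T s₀ θ⟫ + s₀ * ⟪c', glmM T s₀ θ⟫)) := by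
    rw [hMP, hMQ, hD']
    calc ∑ j, u j * (-(x j + s₀ * xd j)) = ∑ j, D * (w j * (-(x j + s₀ * xd j))) := by
          refine Finset.sum_congr rfl fun j _ => ?_
          rw [hu_eq j]; ring
      _ = D * ∑ j, (w j * (-(x j + s₀ * xd j))) := by rw [← Finset.mul_sum]
      _ = D * (-((∑ j, w j * x j) + s₀ * ∑ j, w j * xd j)) := by
          congr 1
          rw [Finset.mul_sum, ← Finset.sum_add_distrib, ← Finset.sum_neg_distrib]
          exact Finset.sum_congr rfl fun j _ => by ring
  have hVθ : -(glmV T s₀ θ θ) - s₀ • glmV T s₀ θ c' =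
      ∑ i, (-(w i * ⟪T i - glmM T s₀ θ, θ⟫) +
        -(s₀ * (w i * ⟪T i - glmM T s₀ θ, c'⟫))) • T i := by
    rw [glmV_apply' T hN, glmV_apply' T hN, Finset.smul_sum, sub_eq_add_neg,
      ← Finset.sum_neg_distrib, ← Finset.sum_neg_distrib, ← Finset.sum_add_distrib]
    refine Finset.sum_congr rfl fun i _ => ?_
    rw [smul_smul, ← neg_smul, ← neg_smul, ← add_smul]
  rw [hVθ]
  refine Finset.sum_congr rfl fun i _ => ?_
  congr 1
  have h1 : ⟪T i - glmM T s₀ θ, θ⟫ = x i - ⟪θ, glmM T s₀ θ⟫ := by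
    rw [inner_sub_left, real_inner_comm θ (T i), real_inner_comm θ (glmM T s₀ θ)]
  have h2 : ⟪T i - glmM T s₀ θ, c'⟫ = xd i - ⟪c', glmM T s₀ θ⟫ := by
    rw [inner_sub_left, real_inner_comm c' (T i), real_inner_comm c' (glmM T s₀ θ)]
  rw [h1, h2, hu_eq i, hDeq]
  field_simp
  ring

end Deriv
section Rest

local notation "⟪" x ", " y "⟫" => (inner ℝ x y : ℝ)

variable {d N : ℕ}

lemma continuous_glmW (T : Fin N → EuclideanSpace ℝ (Fin d)) (hN : 0 < N)
    (θ : EuclideanSpace ℝ (Fin d)) (i : Fin N) :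
    Continuous fun ν => glmW T ν θ i := by
  have h : (fun ν => glmW T ν θ i) =
      fun ν => Real.exp (-ν * ⟪θ, T i⟫) / ∑ j, Real.exp (-ν * ⟪θ, T j⟫) := by
    funext ν; rw [glmW_eq T hN]; rfl
  rw [h]
  refine Continuous.div ?_ ?_ fun ν => (glmD_pos T hN ν θ).ne'
  · exact Real.continuous_exp.comp (continuous_neg.mul continuous_const)
  · exact continuous_finset_sum _ fun j _ =>
      Real.continuous_exp.comp (continuous_neg.mul continuous_const)

lemma continuous_glmM (T : Fin N → EuclideanSpace ℝ (Fin d)) (hN : 0 < N)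
    (θ : EuclideanSpace ℝ (Fin d)) :
    Continuous fun ν => glmM T ν θ := by
  have h : (fun ν => glmM T ν θ) = fun ν => ∑ i, glmW T ν θ i • T i := by
    funext ν; rw [glmM_eq]
  rw [h]
  exact continuous_finset_sum _ fun i _ => (continuous_glmW T hN θ i).smul continuous_const

lemma continuous_glmV_apply (T : Fin N → EuclideanSpace ℝ (Fin d)) (hN : 0 < N)
    (θ v : EuclideanSpace ℝ (Fin d)) :
    Continuous fun ν => glmV T ν θ v := by
  have h : (fun ν => glmV T ν θ v) =
      fun ν => ∑ i, (glmW T ν θ i * ⟪T i - glmM T ν θ, v⟫) • (T i - glmM T ν θ) := by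
    funext ν; rw [glmV_apply]
  rw [h]
  refine continuous_finset_sum _ fun i _ => Continuous.fun_smul ?_ ?_
  · exact (continuous_glmW T hN θ i).mul
      (Continuous.inner (continuous_const.sub (continuous_glmM T hN θ)) continuous_const)
  · exact continuous_const.sub (continuous_glmM T hN θ)

lemma integral_glmV (T : Fin N → EuclideanSpace ℝ (Fin d)) (hN : 0 < N)
    (θ : EuclideanSpace ℝ (Fin d)) (t τ : ℝ) :
    (∫ ν in t..τ, glmV T ν θ θ) = glmM T t θ - glmM T τ θ := by
  have hderiv : ∀ ν ∈ Set.uIcc t τ, HasDerivAt (fun s => glmM T s θ) (-(glmV T ν θ θ)) ν := by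
    intro ν _
    have h := hasDerivAt_glmM_comp T hN (fun _ => θ) 0 ν (hasDerivAt_const ν θ)
    simpa using h
  have hint : IntervalIntegrable (fun ν => -(glmV T ν θ θ)) volume t τ :=
    ((continuous_glmV_apply T hN θ θ).neg).intervalIntegrable t τ
  have h := intervalIntegral.integral_eq_sub_of_hasDerivAt hderiv hint
  rw [intervalIntegral.integral_neg] at h
  have h2 := neg_eq_iff_eq_neg.mp h
  rw [h2, neg_sub]

lemma glmTiltedLoss_eq (T : Fin N → EuclideanSpace ℝ (Fin d)) (hN : 0 < N)
    (A : EuclideanSpace ℝ (Fin d) → ℝ) (t : ℝ) (ht : t ≠ 0) (θ : EuclideanSpace ℝ (Fin d)) :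
    glmTiltedLoss T A t θ = A θ + (1 / t) * glmGamma T t θ := by
  have hNR : (0:ℝ) < (N:ℝ) := by exact_mod_cast hN
  have hD : 0 < ∑ i, Real.exp (-t * ⟪θ, T i⟫) := glmD_pos T hN t θ
  unfold glmTiltedLoss glmGamma
  have h2 : (∑ i, Real.exp (t * (A θ - ⟪θ, T i⟫))) =
      Real.exp (t * A θ) * ∑ i, Real.exp (-t * ⟪θ, T i⟫) := by
    rw [Finset.mul_sum]
    exact Finset.sum_congr rfl fun i _ => by rw [← Real.exp_add]; congr 1; ring
  rw [h2, show (1/(N:ℝ)) * (Real.exp (t * A θ) * ∑ i, Real.exp (-t * ⟪θ, T i⟫)) =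
      Real.exp (t * A θ) * ((1/(N:ℝ)) * ∑ i, Real.exp (-t * ⟪θ, T i⟫)) by ring,
    Real.log_mul (Real.exp_ne_zero _) (by positivity), Real.log_exp]
  field_simp

lemma hasDerivAt_loss_comp (T : Fin N → EuclideanSpace ℝ (Fin d)) (hN : 0 < N)
    (A : EuclideanSpace ℝ (Fin d) → ℝ) (hA : ContDiff ℝ 2 A) (t : ℝ) (ht : t ≠ 0)
    (c : ℝ → EuclideanSpace ℝ (Fin d)) (c' : EuclideanSpace ℝ (Fin d)) (s₀ : ℝ)
    (hc : HasDerivAt c c' s₀) :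
    HasDerivAt (fun s => glmTiltedLoss T A t (c s))
      (⟪gradient A (c s₀), c'⟫ - ⟪glmM T t (c s₀), c'⟫) s₀ := by
  have hNR : (0:ℝ) < (N:ℝ) := by exact_mod_cast hN
  set θ := c s₀ with hθdef
  have hD : 0 < ∑ i, Real.exp (-t * ⟪θ, T i⟫) := glmD_pos T hN t θ
  have hDne : (∑ i, Real.exp (-t * ⟪θ, T i⟫)) ≠ 0 := hD.ne'
  -- derivative of A along the path
  have hAd : DifferentiableAt ℝ A θ := (hA.differentiable (by norm_num)) θ
  have hA1 : HasDerivAt (fun s => A (c s)) ⟪gradient A θ, c'⟫ s₀ := by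
    have h := (hAd.hasGradientAt.hasFDerivAt).comp_hasDerivAt s₀ hc
    exact h
  -- derivative of Γ(t;·) along the path
  have hinner : ∀ i : Fin N, HasDerivAt (fun s => ⟪c s, T i⟫) ⟪c', T i⟫ s₀ := fun i => by
    simpa using HasDerivAt.inner ℝ hc (hasDerivAt_const s₀ (T i))
  have hexp : ∀ i : Fin N, HasDerivAt (fun s => Real.exp (-t * ⟪c s, T i⟫))
      (Real.exp (-t * ⟪θ, T i⟫) * (-t * ⟪c', T i⟫)) s₀ := fun i =>
    ((hinner i).const_mul (-t)).exp
  have hsum : HasDerivAt (fun s => (1/(N:ℝ)) * ∑ i, Real.exp (-t * ⟪c s, T i⟫))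
      ((1/(N:ℝ)) * ∑ i, Real.exp (-t * ⟪θ, T i⟫) * (-t * ⟪c', T i⟫)) s₀ :=
    (HasDerivAt.fun_sum fun i _ => hexp i).const_mul _
  have hSpos : 0 < (1/(N:ℝ)) * ∑ i, Real.exp (-t * ⟪θ, T i⟫) := by positivity
  have hΓ : HasDerivAt (fun s => glmGamma T t (c s))
      (((1/(N:ℝ)) * ∑ i, Real.exp (-t * ⟪θ, T i⟫) * (-t * ⟪c', T i⟫)) /
        ((1/(N:ℝ)) * ∑ i, Real.exp (-t * ⟪θ, T i⟫))) s₀ := by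
    have h := hsum.log hSpos.ne'
    exact h
  have hq : (((1/(N:ℝ)) * ∑ i, Real.exp (-t * ⟪θ, T i⟫) * (-t * ⟪c', T i⟫)) /
        ((1/(N:ℝ)) * ∑ i, Real.exp (-t * ⟪θ, T i⟫))) = -t * ⟪glmM T t θ, c'⟫ := by
    rw [inner_glmM, mul_div_mul_left _ _ (by positivity : (1/(N:ℝ)) ≠ 0)]
    rw [Finset.sum_div, Finset.mul_sum]
    refine Finset.sum_congr rfl fun i _ => ?_
    rw [glmW_eq T hN, real_inner_comm c' (T i)]
    simp only [glmD]
    field_simp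
  rw [hq] at hΓ
  have hfun : (fun s => glmTiltedLoss T A t (c s)) =
      fun s => A (c s) + (1/t) * glmGamma T t (c s) :=
    funext fun s => glmTiltedLoss_eq T hN A t ht (c s)
  rw [hfun]
  have hfinal := hA1.add (hΓ.const_mul (1/t))
  have hval : ⟪gradient A θ, c'⟫ + 1/t * (-t * ⟪glmM T t θ, c'⟫) =
      ⟪gradient A θ, c'⟫ - ⟪glmM T t θ, c'⟫ := by
    have hm : (1:ℝ)/t * (-t * ⟪glmM T t θ, c'⟫) = -⟪glmM T t θ, c'⟫ := by
      generalize (⟪glmM T t θ, c'⟫ : ℝ) = m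
      field_simp
    rw [hm]
    ring
  rw [← hval]
  exact hfinal

lemma differentiable_gradient {A : EuclideanSpace ℝ (Fin d) → ℝ} (hA : ContDiff ℝ 2 A) :
    Differentiable ℝ (gradient A) := by
  have h1 : ContDiff ℝ 1 (fderiv ℝ A) := hA.fderiv_right (by norm_num)
  have h2 : Differentiable ℝ (fderiv ℝ A) := h1.differentiable (by norm_num)
  have h3 : Differentiable ℝ
      fun x => (InnerProductSpace.toDual ℝ (EuclideanSpace ℝ (Fin d))).symm (fderiv ℝ A x) :=
    (InnerProductSpace.toDual ℝ (EuclideanSpace ℝ (Fin d))).symm.differentiable.comp h2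
  exact h3

lemma gradient_fderiv_inner {A : EuclideanSpace ℝ (Fin d) → ℝ} (hA : ContDiff ℝ 2 A)
    (x u v : EuclideanSpace ℝ (Fin d)) :
    ⟪v, fderiv ℝ (gradient A) x u⟫ = fderiv ℝ (fderiv ℝ A) x u v := by
  have hφ1 : HasFDerivAt (fun y => innerSL ℝ v (gradient A y))
      ((innerSL ℝ v).comp (fderiv ℝ (gradient A) x)) x :=
    ((innerSL ℝ v).hasFDerivAt).comp x ((differentiable_gradient hA x).hasFDerivAt)
  have hφ2 : HasFDerivAt (fun y => (ContinuousLinearMap.apply ℝ ℝ v) (fderiv ℝ A y))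
      ((ContinuousLinearMap.apply ℝ ℝ v).comp (fderiv ℝ (fderiv ℝ A) x)) x :=
    ((ContinuousLinearMap.apply ℝ ℝ v).hasFDerivAt).comp x
      (((hA.fderiv_right (m := 1) (by norm_num)).differentiable (by norm_num) x).hasFDerivAt)
  have hfun2 : (fun y => innerSL ℝ v (gradient A y)) =
      fun y => (ContinuousLinearMap.apply ℝ ℝ v) (fderiv ℝ A y) := by
    funext y
    simp only [ContinuousLinearMap.apply_apply, innerSL_apply_apply]
    rw [real_inner_comm]
    exact InnerProductSpace.toDual_symm_apply
  rw [hfun2] at hφ1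
  have heq := hφ1.unique hφ2
  have happ := ContinuousLinearMap.ext_iff.mp heq u
  simpa using happ

lemma gradient_fderiv_symm {A : EuclideanSpace ℝ (Fin d) → ℝ} (hA : ContDiff ℝ 2 A)
    (x u v : EuclideanSpace ℝ (Fin d)) :
    ⟪fderiv ℝ (gradient A) x u, v⟫ = ⟪u, fderiv ℝ (gradient A) x v⟫ := by
  have hsymm := (hA.contDiffAt (x := x)).isSymmSndFDerivAt (by simp)
  calc ⟪fderiv ℝ (gradient A) x u, v⟫
      = ⟪v, fderiv ℝ (gradient A) x u⟫ := (real_inner_comm _ v).symm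
    _ = fderiv ℝ (fderiv ℝ A) x u v := gradient_fderiv_inner hA x u v
    _ = fderiv ℝ (fderiv ℝ A) x v u := hsymm u v
    _ = ⟪u, fderiv ℝ (gradient A) x v⟫ := (gradient_fderiv_inner hA x v u).symm

end Rest

section Main

local notation "⟪" x ", " y "⟫" => (inner ℝ x y : ℝ)

/-- **Derivative of the tilted loss along the solution path.** In the GLM setting, let
`θ̆ : ℝ → ℝ^d` be a differentiable curve of stationary solutions (`∇A(θ̆(τ)) = M(τ;θ̆(τ))`)
with `H(τ) = ∇²A(θ̆(τ)) + τ·V(τ;θ̆(τ))` two-sidedly invertible. Then for every `t ≠ 0` and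
every `τ`,
`d/dτ R̃(t;θ̆(τ)) = θ̆(τ)ᵀ·V(τ;θ̆(τ))·H(τ)⁻¹·(∫_t^τ V(ν;θ̆(τ)) dν)·θ̆(τ)`;
in particular this derivative vanishes at `τ = t`. -/
theorem glm_tilted_loss_along_solution_path {d N : ℕ} (hN : 0 < N)
    (T : Fin N → EuclideanSpace ℝ (Fin d))
    (A : EuclideanSpace ℝ (Fin d) → ℝ) (hA : ContDiff ℝ 2 A)
    (θbreve : ℝ → EuclideanSpace ℝ (Fin d)) (hθ : Differentiable ℝ θbreve)
    (hstat : ∀ τ : ℝ, gradient A (θbreve τ) = glmM T τ (θbreve τ))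
    (H Hinv : ℝ → EuclideanSpace ℝ (Fin d) →L[ℝ] EuclideanSpace ℝ (Fin d))
    (hH : ∀ τ : ℝ, H τ = fderiv ℝ (gradient A) (θbreve τ) + τ • glmV T τ (θbreve τ))
    (hHinv : ∀ τ : ℝ,
      (H τ).comp (Hinv τ) = ContinuousLinearMap.id ℝ (EuclideanSpace ℝ (Fin d)) ∧
      (Hinv τ).comp (H τ) = ContinuousLinearMap.id ℝ (EuclideanSpace ℝ (Fin d)))
    (t : ℝ) (ht : t ≠ 0) :
    (∀ τ : ℝ, deriv (fun s => glmTiltedLoss T A t (θbreve s)) τ =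
      (inner ℝ (θbreve τ)
        (glmV T τ (θbreve τ)
          (Hinv τ (∫ ν in t..τ, glmV T ν (θbreve τ) (θbreve τ)))) : ℝ)) ∧
    deriv (fun s => glmTiltedLoss T A t (θbreve s)) t = 0 := by
  have main : ∀ τ : ℝ, deriv (fun s => glmTiltedLoss T A t (θbreve s)) τ =
      (inner ℝ (θbreve τ)
        (glmV T τ (θbreve τ)
          (Hinv τ (∫ ν in t..τ, glmV T ν (θbreve τ) (θbreve τ)))) : ℝ) := by
    intro τ
    set θ := θbreve τ with hθd
    set p := deriv θbreve τ with hpd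
    have hp : HasDerivAt θbreve p τ := (hθ τ).hasDerivAt
    -- derivative of the loss along the path
    have hloss := hasDerivAt_loss_comp T hN A hA t ht θbreve p τ hp
    have hd : deriv (fun s => glmTiltedLoss T A t (θbreve s)) τ =
        ⟪gradient A θ, p⟫ - ⟪glmM T t θ, p⟫ := hloss.deriv
    -- implicit differentiation of the stationarity equation
    have hg1 : HasDerivAt (fun s => gradient A (θbreve s)) (fderiv ℝ (gradient A) θ p) τ :=
      ((differentiable_gradient hA θ).hasFDerivAt).comp_hasDerivAt τ hp
    have hg2 : HasDerivAt (fun s => glmM T s (θbreve s))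
        (-(glmV T τ θ θ) - τ • glmV T τ θ p) τ :=
      hasDerivAt_glmM_comp T hN θbreve p τ hp
    have hfeq : (fun s => gradient A (θbreve s)) = fun s => glmM T s (θbreve s) :=
      funext hstat
    rw [hfeq] at hg1
    have heq := hg1.unique hg2
    have hHp : H τ p = -(glmV T τ θ θ) := by
      rw [hH τ]
      simp only [ContinuousLinearMap.add_apply, ContinuousLinearMap.smul_apply]
      rw [heq]
      abel
    have hp_eq : p = -(Hinv τ (glmV T τ θ θ)) := by
      have h1 : Hinv τ (H τ p) = p := by
        have h2 := ContinuousLinearMap.ext_iff.mp (hHinv τ).2 p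
        simpa using h2
      rw [hHp, map_neg] at h1
      exact h1.symm
    -- fundamental theorem of calculus
    have hint : (∫ ν in t..τ, glmV T ν θ θ) = glmM T t θ - glmM T τ θ :=
      integral_glmV T hN θ t τ
    -- self-adjointness of `H` and `Hinv`
    have hHsym : ∀ u v : EuclideanSpace ℝ (Fin d), ⟪H τ u, v⟫ = ⟪u, H τ v⟫ := by
      intro u v
      rw [hH τ]
      simp only [ContinuousLinearMap.add_apply, ContinuousLinearMap.smul_apply]
      rw [inner_add_left, inner_add_right, real_inner_smul_left, real_inner_smul_right,
        gradient_fderiv_symm hA θ u v, glmV_symm T τ θ u v]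
    have hid : ∀ y, H τ (Hinv τ y) = y := fun y => by
      have h2 := ContinuousLinearMap.ext_iff.mp (hHinv τ).1 y
      simpa using h2
    have hHinvsym : ∀ u v : EuclideanSpace ℝ (Fin d), ⟪Hinv τ u, v⟫ = ⟪u, Hinv τ v⟫ := by
      intro u v
      calc ⟪Hinv τ u, v⟫ = ⟪Hinv τ u, H τ (Hinv τ v)⟫ := by rw [hid]
        _ = ⟪H τ (Hinv τ u), Hinv τ v⟫ := (hHsym _ _).symm
        _ = ⟪u, Hinv τ v⟫ := by rw [hid]
    -- assemble everything
    rw [hd, hstat τ, ← inner_sub_left]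
    have hMM : glmM T τ θ - glmM T t θ = -(∫ ν in t..τ, glmV T ν θ θ) := by
      rw [hint, neg_sub]
    rw [hMM, hp_eq, inner_neg_neg]
    calc ⟪(∫ ν in t..τ, glmV T ν θ θ), Hinv τ (glmV T τ θ θ)⟫
        = ⟪Hinv τ (∫ ν in t..τ, glmV T ν θ θ), glmV T τ θ θ⟫ := by
          rw [hHinvsym, real_inner_comm]
      _ = ⟪glmV T τ θ θ, Hinv τ (∫ ν in t..τ, glmV T ν θ θ)⟫ := real_inner_comm _ _
      _ = ⟪θ, glmV T τ θ (Hinv τ (∫ ν in t..τ, glmV T ν θ θ))⟫ :=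
          glmV_symm T τ θ θ _
  refine ⟨main, ?_⟩
  rw [main t]
  simp [intervalIntegral.integral_same]


end Main
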